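/- Under the same hypotheses, for any operator Z commuting with both X and Y and any r ≥ dim U + 2, one has (Y + XZ)^r = (XZ)^r. -/
import Mathlib

open Module LinearMap Submodule

section auxdim
set_option linter.unusedSectionVars false
variable {F E : Type*} [Field F] [AddCommGroup E] [Module F E] [FiniteDimensional F E]

lemma stmt7aux_ker_pow_mono (N : E →ₗ[F] E) {i j : ℕ} (h : i ≤ j) :
    LinearMap.ker (N ^ i) ≤ LinearMap.ker (N ^ j) := by
  intro x hx
  obtain ⟨t, rfl⟩ := Nat.exists_eq_add_of_le h
  rw [LinearMap.mem_ker] at hx ⊢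
  rw [add_comm, pow_add, Module.End.mul_apply, hx, map_zero]

lemma stmt7aux_rank_eq (N : E →ₗ[F] E) (m : ℕ) :
    finrank F ↥(LinearMap.ker (N ^ (m+1))) =
      finrank F ↥((LinearMap.ker (N ^ (m+1))).map N) + finrank F ↥(LinearMap.ker N) := by
  have h := LinearMap.finrank_range_add_finrank_ker (N.domRestrict (LinearMap.ker (N ^ (m+1))))
  rw [LinearMap.range_domRestrict, LinearMap.ker_domRestrict] at h
  have hle : LinearMap.ker N ≤ LinearMap.ker (N ^ (m+1)) := by
    intro x hx
    rw [LinearMap.mem_ker] at hx ⊢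
    rw [pow_succ, Module.End.mul_apply, hx, map_zero]
  have he : finrank F ↥(Submodule.comap (LinearMap.ker (N ^ (m+1))).subtype (LinearMap.ker N))
      = finrank F ↥(LinearMap.ker N) :=
    LinearEquiv.finrank_eq (Submodule.comapSubtypeEquivOfLe hle)
  omega

lemma stmt7aux_map_le (N : E →ₗ[F] E) (m : ℕ) :
    (LinearMap.ker (N ^ (m+1))).map N ≤ LinearMap.ker (N ^ m) := by
  intro y hy
  obtain ⟨x, hx, rfl⟩ := Submodule.mem_map.mp hy
  rw [LinearMap.mem_ker] at hx ⊢
  rw [← Module.End.mul_apply, ← pow_succ, hx]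

lemma stmt7aux_inf (N : E →ₗ[F] E) (m : ℕ) :
    (LinearMap.ker (N ^ (m+2))).map N ⊓ LinearMap.ker (N ^ m) =
      (LinearMap.ker (N ^ (m+1))).map N := by
  ext y
  simp only [Submodule.mem_inf, Submodule.mem_map, LinearMap.mem_ker]
  constructor
  · rintro ⟨⟨x, hx, rfl⟩, hy⟩
    refine ⟨x, ?_, rfl⟩
    rw [pow_succ, Module.End.mul_apply]
    exact hy
  · rintro ⟨x, hx, rfl⟩
    refine ⟨⟨x, ?_, rfl⟩, ?_⟩
    · have e : m + 2 = (m + 1) + 1 := rfl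
      rw [e, pow_succ', Module.End.mul_apply, hx, map_zero]
    · rw [← Module.End.mul_apply, ← pow_succ, hx]

lemma stmt7aux_convex (N : E →ₗ[F] E) (m : ℕ) :
    finrank F ↥(LinearMap.ker (N ^ (m+2))) + finrank F ↥(LinearMap.ker (N ^ m)) ≤
      finrank F ↥(LinearMap.ker (N ^ (m+1))) + finrank F ↥(LinearMap.ker (N ^ (m+1))) := by
  have h1 := stmt7aux_rank_eq N (m+1)
  have e : m + 1 + 1 = m + 2 := rfl
  rw [e] at h1
  have h2 := stmt7aux_rank_eq N m
  have h3 := Submodule.finrank_sup_add_finrank_inf_eq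
    ((LinearMap.ker (N ^ (m+2))).map N) (LinearMap.ker (N ^ m))
  rw [stmt7aux_inf N m] at h3
  have h4 : (LinearMap.ker (N ^ (m+2))).map N ⊔ LinearMap.ker (N ^ m) ≤
      LinearMap.ker (N ^ (m+1)) := by
    apply sup_le
    · have := stmt7aux_map_le N (m+1)
      rw [e] at this
      exact this
    · exact stmt7aux_ker_pow_mono N (Nat.le_succ m)
  have h5 := Submodule.finrank_mono h4
  omega

lemma stmt7aux_surj (N : E →ₗ[F] E) (k : ℕ)
    (hb : finrank F ↥(LinearMap.ker (N ^ (k+2))) =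
      finrank F ↥(LinearMap.ker (N ^ (k+1))) + finrank F ↥(LinearMap.ker (N ^ 1))) :
    ∀ m, m ≤ k + 1 → LinearMap.ker (N ^ m) ≤ (LinearMap.ker (N ^ (m+1))).map N := by
  have key : ∀ t m, m + t = k + 1 →
      finrank F ↥(LinearMap.ker (N ^ 1)) + finrank F ↥(LinearMap.ker (N ^ m)) ≤
        finrank F ↥(LinearMap.ker (N ^ (m+1))) := by
    intro t
    induction t with
    | zero =>
      intro m hm
      have : m = k + 1 := by omega
      subst this
      have e : k + 1 + 1 = k + 2 := rfl
      rw [e]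
      omega
    | succ t ih =>
      intro m hm
      have h1 := ih (m+1) (by omega)
      have e : m + 1 + 1 = m + 2 := rfl
      rw [e] at h1
      have h2 := stmt7aux_convex N m
      omega
  intro m hm
  have hlow := key (k + 1 - m) m (by omega)
  have heq := stmt7aux_rank_eq N m
  have hm1 : finrank F ↥(LinearMap.ker (N ^ 1)) = finrank F ↥(LinearMap.ker N) := by
    rw [pow_one]
  exact (Submodule.eq_of_le_of_finrank_le (stmt7aux_map_le N m) (by omega)).ge

end auxdim

/-- Lemma 2.4: commuting nilpotent operators `X`, `Y`, with `V = W ⊕ U`, `W`, `U`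
`X`-invariant, `YW ⊆ U`, and all Jordan blocks of `X|_W` of size `> k + 1`
where `k = h(X|_U)` is the nilpotency index of `X` on `U` (the Jordan-block condition
is expressed via kernel dimensions: the number of blocks of `X|_W` of size `≥ k + 2`
equals the total number of blocks `dim Ker(X|_W)`). If moreover `Z` commutes with `X` and `Y`,
then `(Y + XZ)^r = (XZ)^r` for every `r ≥ dim U + 2`. -/
theorem stmt7 (F : Type*) [Field F] (V : Type*) [AddCommGroup V] [Module F V]
    [FiniteDimensional F V]
    (X Y : V →ₗ[F] V) (hXnil : IsNilpotent X) (hYnil : IsNilpotent Y)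
    (hc : Commute X Y)
    (W U : Submodule F V) (hcompl : IsCompl W U)
    (hXW : ∀ x ∈ W, X x ∈ W) (hXU : ∀ x ∈ U, X x ∈ U) (hYW : ∀ x ∈ W, Y x ∈ U)
    (k : ℕ) (hk1 : 1 ≤ k) (hk2 : ∀ x ∈ U, (X ^ k) x = 0)
    (hk3 : k = 1 ∨ ∃ x ∈ U, (X ^ (k - 1)) x ≠ 0)
    (hblocks : Module.finrank F (LinearMap.ker ((X.restrict hXW) ^ (k + 2)))
      = Module.finrank F (LinearMap.ker ((X.restrict hXW) ^ (k + 1)))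
        + Module.finrank F (LinearMap.ker (X.restrict hXW)))
    (Z : V →ₗ[F] V) (hZX : Commute Z X) (hZY : Commute Z Y)
    (r : ℕ) (hr : Module.finrank F U + 2 ≤ r) :
    (Y + X * Z) ^ r = (X * Z) ^ r := by
  classical
  have hdec : ∀ v : V, ∃ w ∈ W, ∃ u ∈ U, v = w + u := by
    intro v
    have hv : v ∈ W ⊔ U := by rw [hcompl.sup_eq_top]; exact Submodule.mem_top
    obtain ⟨w, hw, u, hu, h⟩ := Submodule.mem_sup.mp hv
    exact ⟨w, hw, u, hu, h.symm⟩
  have hWU0 : ∀ x, x ∈ W → x ∈ U → x = 0 := fun x h1 h2 =>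
    Submodule.disjoint_def.mp hcompl.disjoint x h1 h2
  by_cases hU0 : U = ⊥
  · have hY0 : Y = 0 := by
      ext v
      obtain ⟨w, hw, u, hu, rfl⟩ := hdec v
      have hu0 : u = 0 := by rw [hU0, Submodule.mem_bot] at hu; exact hu
      have hYw : Y w ∈ U := hYW w hw
      rw [hU0, Submodule.mem_bot] at hYw
      simp [hu0, hYw]
    rw [hY0, zero_add]
  -- main case
  have hXWp : ∀ n, ∀ x ∈ W, (X ^ n) x ∈ W := by
    intro n
    induction n with
    | zero => intro x hx; simpa using hx
    | succ n ih =>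
      intro x hx
      rw [pow_succ, Module.End.mul_apply]
      exact ih (X x) (hXW x hx)
  have hXUp : ∀ n, ∀ x ∈ U, (X ^ n) x ∈ U := by
    intro n
    induction n with
    | zero => intro x hx; simpa using hx
    | succ n ih =>
      intro x hx
      rw [pow_succ, Module.End.mul_apply]
      exact ih (X x) (hXU x hx)
  have hYXn : ∀ (n : ℕ) (v : V), Y ((X ^ n) v) = (X ^ n) (Y v) := by
    intro n v
    have h : Y * X ^ n = X ^ n * Y := hc.symm.pow_right n
    calc Y ((X ^ n) v) = (Y * X ^ n) v := rfl
      _ = (X ^ n * Y) v := by rw [h]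
      _ = (X ^ n) (Y v) := rfl
  have happ : ∀ (s t : ℕ) (x : V), (Y ^ (s + t)) x = (Y ^ s) ((Y ^ t) x) := by
    intro s t x; rw [pow_add, Module.End.mul_apply]
  have habs : ∀ (e t : ℕ) (x : V), t ≤ e → (Y ^ t) x = 0 → (Y ^ e) x = 0 := by
    intro e t x hte h
    have he : e = (e - t) + t := by omega
    rw [he, happ, h, map_zero]
  -- filtrations
  set Uj : ℕ → Submodule F V := fun j => LinearMap.ker (X ^ j) ⊓ U with hUjdef
  set Wj : ℕ → Submodule F V := fun j => LinearMap.ker (X ^ j) ⊓ W with hWjdef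
  set Fj : ℕ → Submodule F V := fun j => Uj j ⊔ Wj j with hFjdef
  set m : ℕ → ℕ := fun j => Module.finrank F ↥(Uj j) with hmdef
  have hUjmem : ∀ j x, x ∈ Uj j ↔ (X ^ j) x = 0 ∧ x ∈ U := by
    intro j x
    simp only [hUjdef, Submodule.mem_inf, LinearMap.mem_ker]
  have hWjmem : ∀ j x, x ∈ Wj j ↔ (X ^ j) x = 0 ∧ x ∈ W := by
    intro j x
    simp only [hWjdef, Submodule.mem_inf, LinearMap.mem_ker]
  have hFjmem : ∀ j x, x ∈ Fj j ↔ ∃ u ∈ Uj j, ∃ w ∈ Wj j, u + w = x := by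
    intro j x
    simp only [hFjdef]
    exact Submodule.mem_sup
  have hUleF : ∀ j, Uj j ≤ Fj j := by
    intro j; simp only [hFjdef]; exact le_sup_left
  have hWleF : ∀ j, Wj j ≤ Fj j := by
    intro j; simp only [hFjdef]; exact le_sup_right
  have hUjmono : ∀ {i j : ℕ}, i ≤ j → Uj i ≤ Uj j := by
    intro i j hij
    simp only [hUjdef]
    exact inf_le_inf (stmt7aux_ker_pow_mono X hij) le_rfl
  have hWjmono : ∀ {i j : ℕ}, i ≤ j → Wj i ≤ Wj j := by
    intro i j hij
    simp only [hWjdef]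
    exact inf_le_inf (stmt7aux_ker_pow_mono X hij) le_rfl
  have hmmono : ∀ {i j : ℕ}, i ≤ j → m i ≤ m j := by
    intro i j hij
    simp only [hmdef]
    exact Submodule.finrank_mono (hUjmono hij)
  have hUj0 : Uj 0 = ⊥ := by
    simp only [hUjdef]
    rw [pow_zero]
    have : LinearMap.ker (1 : V →ₗ[F] V) = ⊥ := rfl
    rw [this, bot_inf_eq]
  have hUjk : Uj k = U := by
    simp only [hUjdef]
    apply inf_eq_right.mpr
    intro x hx
    exact LinearMap.mem_ker.mpr (hk2 x hx)
  have hm0 : m 0 = 0 := by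
    simp only [hmdef]
    rw [hUj0]
    simp
  have hmk : m k = Module.finrank F ↥U := by
    simp only [hmdef]
    rw [hUjk]
  have hdecY : ∀ j, ∀ u, u ∈ Uj j → ∃ w, w ∈ Wj j ∧ ∃ u', u' ∈ Uj j ∧ Y u = w + u' := by
    intro j u hu
    rw [hUjmem] at hu
    obtain ⟨hXju, huU⟩ := hu
    obtain ⟨w, hw, u', hu', heq⟩ := hdec (Y u)
    have h0 : (X ^ j) (Y u) = 0 := by
      rw [← hYXn, hXju, map_zero]
    have hsum : (X ^ j) w + (X ^ j) u' = 0 := by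
      rw [← map_add, ← heq, h0]
    have hwW : (X ^ j) w ∈ W := hXWp j w hw
    have hwU : (X ^ j) w ∈ U := by
      have hh : (X ^ j) w = - ((X ^ j) u') := by
        rw [eq_neg_iff_add_eq_zero]
        exact hsum
      rw [hh]
      exact neg_mem (hXUp j u' hu')
    have hw0 : (X ^ j) w = 0 := hWU0 _ hwW hwU
    have hu'0 : (X ^ j) u' = 0 := by rwa [hw0, zero_add] at hsum
    exact ⟨w, (hWjmem j w).mpr ⟨hw0, hw⟩, u', (hUjmem j u').mpr ⟨hu'0, hu'⟩, heq⟩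
  have hNpow : ∀ (n : ℕ) (x : ↥W), (((X.restrict hXW) ^ n) x : V) = (X ^ n) (x : V) := by
    intro n x
    rw [Module.End.pow_restrict n hXW, LinearMap.restrict_apply]
  have hsurjV : ∀ j, j ≤ k + 1 → ∀ v, v ∈ Wj j → ∃ v', v' ∈ Wj (j+1) ∧ X v' = v := by
    intro j hj v hv
    rw [hWjmem] at hv
    obtain ⟨hvk, hvW⟩ := hv
    have hbN : Module.finrank F ↥(LinearMap.ker ((X.restrict hXW) ^ (k+2))) =
        Module.finrank F ↥(LinearMap.ker ((X.restrict hXW) ^ (k+1))) +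
        Module.finrank F ↥(LinearMap.ker ((X.restrict hXW) ^ 1)) := by
      rw [pow_one]; exact hblocks
    have hS := stmt7aux_surj (X.restrict hXW) k hbN j hj
    have hx : (⟨v, hvW⟩ : ↥W) ∈ LinearMap.ker ((X.restrict hXW) ^ j) := by
      rw [LinearMap.mem_ker]
      apply Subtype.ext
      rw [hNpow]
      exact hvk
    obtain ⟨y, hy, hyx⟩ := Submodule.mem_map.mp (hS hx)
    refine ⟨(y : V), ?_, ?_⟩
    · rw [hWjmem]
      refine ⟨?_, y.2⟩
      have h2 := hNpow (j+1) y
      rw [LinearMap.mem_ker.mp hy] at h2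
      simpa using h2.symm
    · have h2 : ((X.restrict hXW) y : V) = X (y : V) := by
        rw [LinearMap.restrict_apply]
      rw [hyx] at h2
      simpa using h2.symm
  have hWdiv : ∀ t j, j + t ≤ k + 2 → ∀ v, v ∈ Wj j → ∃ v', v' ∈ Wj (j + t) ∧ (X ^ t) v' = v := by
    intro t
    induction t with
    | zero =>
      intro j h v hv
      exact ⟨v, by simpa using hv, by simp⟩
    | succ t ih =>
      intro j h v hv
      obtain ⟨v₁, hv₁, hXv₁⟩ := hsurjV j (by omega) v hv
      obtain ⟨v', hv', hXv'⟩ := ih (j+1) (by omega) v₁ hv₁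
      refine ⟨v', ?_, ?_⟩
      · have e : j + 1 + t = j + (t + 1) := by omega
        rwa [e] at hv'
      · rw [pow_succ', Module.End.mul_apply, hXv', hXv₁]
  have hYWj : ∀ j, j ≤ k → ∀ w, w ∈ Wj j → Y w ∈ Uj (j - 2) := by
    intro j hj w hw
    obtain ⟨v', hv', hXv'⟩ := hWdiv (k + 2 - j) j (by omega) w hw
    have hv'W : v' ∈ W := ((hWjmem _ _).mp hv').2
    have hYv' : Y v' ∈ U := hYW v' hv'W
    rw [← hXv', hYXn, hUjmem]
    constructor
    · rw [← Module.End.mul_apply, ← pow_add]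
      have e : j - 2 + (k + 2 - j) = (j - 2 + (k + 2 - j) - k) + k := by omega
      rw [e, pow_add, Module.End.mul_apply, hk2 _ hYv', map_zero]
    · exact hXUp _ _ hYv'
  have hYFj : ∀ j, j ≤ k → ∀ v, v ∈ Fj j → Y v ∈ Fj j := by
    intro j hj v hv
    obtain ⟨u, hu, w, hw, rfl⟩ := (hFjmem j _).mp hv
    rw [map_add]
    apply Submodule.add_mem
    · obtain ⟨w', hw', u', hu', heq⟩ := hdecY j u hu
      rw [heq]
      exact Submodule.add_mem _ (hWleF j hw') (hUleF j hu')
    · exact hUleF j (hUjmono (by omega) (hYWj j hj w hw))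
  have hXUj1 : ∀ j u, u ∈ Uj (j+1) → X u ∈ Uj j := by
    intro j u hu
    rw [hUjmem] at hu ⊢
    obtain ⟨h1, h2⟩ := hu
    refine ⟨?_, hXU u h2⟩
    rw [← Module.End.mul_apply, ← pow_succ, h1]
  have hXWj1 : ∀ j w, w ∈ Wj (j+1) → X w ∈ Wj j := by
    intro j w hw
    rw [hWjmem] at hw ⊢
    obtain ⟨h1, h2⟩ := hw
    refine ⟨?_, hXW w h2⟩
    rw [← Module.End.mul_apply, ← pow_succ, h1]
  have hXFj1 : ∀ j v, v ∈ Fj (j+1) → X v ∈ Fj j := by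
    intro j v hv
    obtain ⟨u, hu, w, hw, rfl⟩ := (hFjmem _ _).mp hv
    rw [map_add]
    exact Submodule.add_mem _ (hUleF j (hXUj1 j u hu)) (hWleF j (hXWj1 j w hw))
  have hXFjt : ∀ t j v, v ∈ Fj (j + t) → (X ^ t) v ∈ Fj j := by
    intro t
    induction t with
    | zero => intro j v hv; simpa using hv
    | succ t ih =>
      intro j v hv
      rw [pow_succ, Module.End.mul_apply]
      apply ih j
      exact hXFj1 (j + t) v hv
  have hstrict : ∀ j, j < k → Uj j < Uj (j+1) := by
    intro j hj
    refine lt_of_le_of_ne (hUjmono (Nat.le_succ j)) ?_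
    intro heq
    have hstab : ∀ t, Uj (j + t) ≤ Uj j := by
      intro t
      induction t with
      | zero => exact le_rfl
      | succ t ih =>
        intro u hu
        rw [hUjmem] at hu
        obtain ⟨h1, h2⟩ := hu
        have hXu : X u ∈ Uj (j + t) := by
          rw [hUjmem]
          refine ⟨?_, hXU u h2⟩
          rw [← Module.End.mul_apply, ← pow_succ]
          exact h1
        have hXuj : X u ∈ Uj j := ih hXu
        have : u ∈ Uj (j + 1) := by
          rw [hUjmem]
          refine ⟨?_, h2⟩
          rw [pow_succ, Module.End.mul_apply]
          exact ((hUjmem j (X u)).mp hXuj).1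
        rw [← heq] at this
        exact this
    have hUle : U ≤ Uj j := by
      have h1 := hstab (k - j)
      have e : j + (k - j) = k := by omega
      rw [e, hUjk] at h1
      exact h1
    rcases hk3 with hk3 | ⟨x, hxU, hxne⟩
    · apply hU0
      rw [Submodule.eq_bot_iff]
      intro x hx
      have h1 := ((hUjmem j x).mp (hUle hx)).1
      have hj0 : j = 0 := by omega
      rw [hj0, pow_zero] at h1
      simpa using h1
    · apply hxne
      have hXjx : (X ^ j) x = 0 := ((hUjmem j x).mp (hUle hxU)).1
      have e : k - 1 = (k - 1 - j) + j := by omega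
      rw [e, pow_add, Module.End.mul_apply, hXjx, map_zero]
  have hstep : ∀ j, j < k → m j + 1 ≤ m (j+1) := by
    intro j hj
    simp only [hmdef]
    exact Submodule.finrank_lt_finrank_of_lt (hstrict j hj)
  have hmb : ∀ t, t ≤ k → m (k - t) + t ≤ Module.finrank F ↥U := by
    intro t
    induction t with
    | zero =>
      intro ht
      have e : k - 0 = k := by omega
      rw [e, ← hmk]
      omega
    | succ t ih =>
      intro ht
      have h1 := hstep (k - t - 1) (by omega)
      have e : k - t - 1 + 1 = k - t := by omega
      rw [e] at h1
      have h2 := ih (by omega)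
      have e2 : k - (t + 1) = k - t - 1 := by omega
      rw [e2]
      omega
  -- core induction: Y ^ (m j + 1) kills Fj j for j ≤ k
  have hP : ∀ j, j ≤ k → ∀ v, v ∈ Fj j → (Y ^ (m j + 1)) v = 0 := by
    intro j
    induction j using Nat.strong_induction_on with
    | _ j IH =>
      intro hjk v hv
      rcases Nat.eq_zero_or_pos j with rfl | hjpos
      · have hF0 : Fj 0 = ⊥ := by
          simp only [hFjdef]
          rw [hUj0]
          have hW0 : Wj 0 = ⊥ := by
            simp only [hWjdef]
            rw [pow_zero]
            have h1 : LinearMap.ker (1 : V →ₗ[F] V) = ⊥ := rfl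
            rw [h1, bot_inf_eq]
          rw [hW0, sup_bot_eq]
        rw [hF0, Submodule.mem_bot] at hv
        rw [hv, map_zero]
      · obtain ⟨jj, rfl⟩ := Nat.exists_eq_succ_of_ne_zero (by omega : j ≠ 0)
        -- kill lemma for the W-part with exponent m jj + 1
        have hkw : ∀ w, w ∈ Wj (jj+1) → (Y ^ (m jj + 1)) w = 0 := by
          intro w hw
          have hYw : Y w ∈ Uj (jj+1-2) := hYWj (jj+1) hjk w hw
          rcases Nat.eq_zero_or_pos jj with hjj0 | hjjpos
          · subst hjj0
            have h0 : Y w ∈ Uj 0 := hYw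
            rw [hUj0, Submodule.mem_bot] at h0
            rw [pow_succ, Module.End.mul_apply, h0, map_zero]
          · have hle : Uj (jj+1-2) ≤ Fj (jj-1) := by
              have e : jj + 1 - 2 = jj - 1 := by omega
              rw [e]
              exact hUleF (jj-1)
            have h1 : (Y ^ (m (jj-1) + 1)) (Y w) = 0 :=
              IH (jj-1) (by omega) (by omega) (Y w) (hle hYw)
            have h2 : (Y ^ (m (jj-1) + 2)) w = 0 := by
              have e : m (jj-1) + 2 = (m (jj-1) + 1) + 1 := rfl
              rw [e, pow_succ, Module.End.mul_apply]
              exact h1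
            apply habs _ _ _ ?_ h2
            have h3 := hstep (jj-1) (by omega)
            have e : jj - 1 + 1 = jj := by omega
            rw [e] at h3
            omega
        -- the key step: Y ^ (m (jj+1) - m jj) sends Uj (jj+1) into S₀
        have hH : ∀ u, u ∈ Uj (jj+1) →
            (Y ^ (m (jj+1) - m jj)) u ∈ Wj (jj+1) ⊔ Fj jj := by
          intro u hu
          set S₀ : Submodule F V := Wj (jj+1) ⊔ Fj jj with hS₀def
          have hS₀Y : ∀ x, x ∈ S₀ → Y x ∈ S₀ := by
            intro x hx
            obtain ⟨w, hw, f, hf, rfl⟩ := Submodule.mem_sup.mp hx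
            rw [map_add]
            apply Submodule.add_mem
            · have h1 : Y w ∈ Uj (jj+1-2) := hYWj (jj+1) hjk w hw
              have h2 : Uj (jj+1-2) ≤ Fj jj := (hUjmono (by omega)).trans (hUleF jj)
              exact Submodule.mem_sup_right (h2 h1)
            · exact Submodule.mem_sup_right (hYFj jj (by omega) f hf)
          have hS₀Yp : ∀ (t : ℕ) (x : V), x ∈ S₀ → (Y ^ t) x ∈ S₀ := by
            intro t
            induction t with
            | zero => intro x hx; simpa using hx
            | succ t ih =>
              intro x hx
              rw [pow_succ', Module.End.mul_apply]
              exact hS₀Y _ (ih x hx)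
          set R : ℕ → Submodule F V := fun s => Uj (jj+1) ⊓ Submodule.comap (Y ^ s) S₀
            with hRdef
          have hRmem : ∀ s x, x ∈ R s ↔ x ∈ Uj (jj+1) ∧ (Y ^ s) x ∈ S₀ := by
            intro s x
            simp only [hRdef, Submodule.mem_inf, Submodule.mem_comap]
          have hRle : ∀ s, R s ≤ R (s+1) := by
            intro s x hx
            rw [hRmem] at hx ⊢
            refine ⟨hx.1, ?_⟩
            rw [pow_succ', Module.End.mul_apply]
            exact hS₀Y _ hx.2
          have hRmono : ∀ s t, s ≤ t → R s ≤ R t := by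
            intro s t hst
            obtain ⟨c, rfl⟩ := Nat.exists_eq_add_of_le hst
            induction c with
            | zero => exact le_rfl
            | succ c ih =>
              have e : s + (c + 1) = (s + c) + 1 := rfl
              rw [e]
              exact (ih (by omega)).trans (hRle (s + c))
          have hRstep : ∀ s, R s = R (s+1) → R (s+1) = R (s+2) := by
            intro s heq
            refine le_antisymm (hRle (s+1)) ?_
            intro u2 hu2
            rw [hRmem] at hu2
            obtain ⟨hu2U, hu2S⟩ := hu2
            obtain ⟨w, hw, u', hu', hYu⟩ := hdecY (jj+1) u2 hu2U
            have hwS : ∀ t, (Y ^ t) w ∈ S₀ := fun t =>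
              hS₀Yp t w (Submodule.mem_sup_left hw)
            have h1 : (Y ^ (s+1)) u' ∈ S₀ := by
              have e1 : (Y ^ (s+2)) u2 = (Y ^ (s+1)) (Y u2) := by
                have e : s + 2 = (s+1) + 1 := rfl
                rw [e, pow_succ, Module.End.mul_apply]
              have e2 : (Y ^ (s+1)) u' = (Y ^ (s+2)) u2 - (Y ^ (s+1)) w := by
                rw [e1, hYu, map_add]
                abel
              rw [e2]
              exact Submodule.sub_mem _ hu2S (hwS (s+1))
            have h2 : u' ∈ R (s+1) := (hRmem (s+1) u').mpr ⟨hu', h1⟩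
            rw [← heq] at h2
            rw [hRmem]
            refine ⟨hu2U, ?_⟩
            have e3 : (Y ^ (s+1)) u2 = (Y ^ s) w + (Y ^ s) u' := by
              rw [pow_succ, Module.End.mul_apply, hYu, map_add]
            rw [e3]
            exact Submodule.add_mem _ (hwS s) ((hRmem s u').mp h2).2
          have hRstab : ∀ s, R s = R (s+1) → ∀ t, R (s+t) = R s := by
            intro s heq t
            induction t with
            | zero => rfl
            | succ t ih =>
              have hstep2 : ∀ c, R (s+c) = R (s+c+1) := by
                intro c
                induction c with
                | zero => exact heq
                | succ c ih2 =>
                  have := hRstep (s+c) ih2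
                  exact this
              have e : s + (t+1) = (s+t) + 1 := rfl
              rw [e, ← hstep2 t, ih]
          obtain ⟨n, hn⟩ := hYnil
          have hRn : Uj (jj+1) ≤ R n := by
            intro x hx
            rw [hRmem]
            exact ⟨hx, by rw [hn]; simpa using Submodule.zero_mem S₀⟩
          have hG : ∀ s, Uj (jj+1) ≤ R s ∨ m jj + s ≤ Module.finrank F ↥(R s) := by
            intro s
            induction s with
            | zero =>
              right
              have h0 : Uj jj ≤ R 0 := by
                intro x hx
                rw [hRmem]
                refine ⟨hUjmono (by omega) hx, ?_⟩
                rw [pow_zero]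
                exact Submodule.mem_sup_right (hUleF jj hx)
              simpa using Submodule.finrank_mono h0
            | succ s ih =>
              rcases ih with hfull | hdim
              · left
                exact hfull.trans (hRle s)
              · by_cases heq : R s = R (s+1)
                · left
                  have h1 := hRstab s heq (n+1)
                  have h2 : R n ≤ R (s + (n+1)) := hRmono n (s + (n+1)) (by omega)
                  calc Uj (jj+1) ≤ R n := hRn
                    _ ≤ R (s + (n+1)) := h2
                    _ = R s := h1
                    _ ≤ R (s+1) := hRle s
                · right
                  have hlt : R s < R (s+1) := lt_of_le_of_ne (hRle s) heq
                  have h3 := Submodule.finrank_lt_finrank_of_lt hlt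
                  omega
          have hconc : Uj (jj+1) ≤ R (m (jj+1) - m jj) := by
            rcases hG (m (jj+1) - m jj) with hfull | hdim
            · exact hfull
            · have hle2 : R (m (jj+1) - m jj) ≤ Uj (jj+1) := by
                intro x hx
                exact ((hRmem _ x).mp hx).1
              have hmm : m jj ≤ m (jj+1) := hmmono (by omega)
              have hfr : m (jj+1) = Module.finrank F ↥(Uj (jj+1)) := by
                simp only [hmdef]
              have heq2 := Submodule.eq_of_le_of_finrank_le hle2 (by omega)
              exact heq2.ge
          exact ((hRmem _ u).mp (hconc hu)).2
        -- now assemble: v ∈ Fj (jj+1)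
        obtain ⟨u, hu, w, hw, rfl⟩ := (hFjmem _ _).mp hv
        rw [map_add]
        have hkillw : (Y ^ (m (jj+1) + 1)) w = 0 := by
          apply habs _ (m jj + 1) _ ?_ (hkw w hw)
          have := hmmono (by omega : jj ≤ jj + 1)
          omega
        have hkillu : (Y ^ (m (jj+1) + 1)) u = 0 := by
          have hmm : m jj ≤ m (jj+1) := hmmono (by omega : jj ≤ jj + 1)
          have e : m (jj+1) + 1 = (m jj + 1) + (m (jj+1) - m jj) := by omega
          rw [e, happ]
          obtain ⟨w2, hw2, f, hf, heq⟩ := Submodule.mem_sup.mp (hH u hu)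
          rw [← heq, map_add, hkw w2 hw2, zero_add]
          exact IH jj (by omega) (by omega) f hf
        rw [hkillu, hkillw, add_zero]
  -- Y ∘ X^k = 0 pointwise
  have hYXk : ∀ v : V, Y ((X ^ k) v) = 0 := by
    intro v
    obtain ⟨w, hw, u, hu, rfl⟩ := hdec v
    rw [map_add, map_add]
    have h1 : (X ^ k) u = 0 := hk2 u hu
    rw [h1, map_zero, add_zero, hYXn, hk2 _ (hYW w hw)]
  -- main vanishing: Y^a ∘ X^b = 0 when a ≥ 1 and a + b ≥ dim U + 2
  have hkill : ∀ a b, 1 ≤ a → Module.finrank F ↥U + 2 ≤ a + b →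
      (Y ^ a) * (X ^ b) = 0 := by
    intro a b ha hab
    ext v
    rw [Module.End.mul_apply, LinearMap.zero_apply]
    by_cases hb : k ≤ b
    · have h1 : Y ((X ^ b) v) = 0 := by
        have e : b = k + (b - k) := by omega
        rw [e, pow_add, Module.End.mul_apply]
        exact hYXk _
      have e2 : a = (a - 1) + 1 := by omega
      rw [e2, pow_succ, Module.End.mul_apply, h1, map_zero]
    · have hYv : Y v ∈ Fj k := by
        obtain ⟨w, hw, u, hu, rfl⟩ := hdec v
        rw [map_add]
        apply Submodule.add_mem
        · exact hUleF k (by rw [hUjk]; exact hYW w hw)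
        · apply hYFj k le_rfl
          exact hUleF k (by rw [hUjk]; exact hu)
      have h2 : (X ^ b) (Y v) ∈ Fj (k - b) := by
        apply hXFjt b (k - b)
        have e : k - b + b = k := by omega
        rw [e]
        exact hYv
      have h3 : (Y ^ (m (k-b) + 1)) ((X ^ b) (Y v)) = 0 := hP (k-b) (by omega) _ h2
      have h4 : (Y ^ (m (k-b) + 2)) ((X ^ b) v) = 0 := by
        have e : m (k-b) + 2 = (m (k-b) + 1) + 1 := rfl
        rw [e, pow_succ, Module.End.mul_apply, hYXn]
        exact h3
      apply habs _ (m (k-b) + 2) _ ?_ h4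
      have h5 := hmb b (by omega)
      omega
  -- endgame: binomial expansion
  have hcomm : Commute Y (X * Z) := hc.symm.mul_right hZY.symm
  rw [hcomm.add_pow]
  rw [Finset.sum_eq_single_of_mem 0 (Finset.mem_range.mpr (by omega))
    (fun i hi hine => by
      have hi' : i ≤ r := by
        rw [Finset.mem_range] at hi
        omega
      have hXZ : (X * Z) ^ (r - i) = X ^ (r - i) * Z ^ (r - i) := hZX.symm.mul_pow (r - i)
      rw [hXZ, ← mul_assoc, hkill i (r - i) (by omega) (by omega), zero_mul, zero_mul])]
  simp
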